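/- For the two-period trinomial-tree market with S₀ = 100, three equiprobable time-1 states with S₁ ∈ {150, 100, 80}, and conditional time-2 prices {270,150,75}, {180,100,50}, {120,80,64} respectively (all nine paths equiprobable), zero interest rate, strike K = 100, and zero initial capital: the optimal value of the conditional one-period problem min over ξ̄₁ of CVaR₆₀%((S₂−K)₊ − (S₁−S₀)·ξ₀* − (S₂−S₁)·ξ̄₁ | S₁ = 100) with ξ₀* = 0.9341 is attained at ξ̄₁* = 8/13 ≈ 0.6154, which differs from the time-0 optimal plan ξ₁* ≈ 0.7665 of the static two-period CVaR₆₀% minimization. -/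

import Mathlib

open Set

/-- The conditional time-2 prices on the middle branch (S₁ = 100), each with
probability 1/3. -/
noncomputable def midS2 : Fin 3 → ℝ := ![180, 100, 50]

/-- CVaR at level 60% of a loss over the three equiprobable conditional outcomes:
CVaR_α(X) = inf over c of c + (1/(1−α))·E[(X−c)₊]. -/
noncomputable def cvar60 (loss : Fin 3 → ℝ) : ℝ :=
  sInf {v : ℝ | ∃ c : ℝ,
    v = c + (1 / (1 - 0.6)) * ((1 / 3) * ∑ ω : Fin 3, max (loss ω - c) 0)}

/-- The writer's conditional hedging loss on the middle branch with first-period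
position ξ₀* = 0.9341 and second-period position ξ̄₁: (S₂ − K)₊ − (S₁ − S₀)·ξ₀*
− (S₂ − S₁)·ξ̄₁, with S₀ = S₁ = 100 and K = 100. -/
noncomputable def midLoss (ξ : ℝ) (ω : Fin 3) : ℝ :=
  max (midS2 ω - 100) 0 - (100 - 100) * 0.9341 - (midS2 ω - 100) * ξ

lemma midLoss_lb (ξ c : ℝ) :
    (400 / 13 : ℝ) ≤ c + (1 / (1 - 0.6)) * ((1 / 3) * ∑ ω : Fin 3, max (midLoss ξ ω - c) 0) := by
  simp only [midLoss, midS2, Fin.sum_univ_three, Matrix.cons_val_zero, Matrix.cons_val_one, Matrix.cons_val_two, Matrix.head_cons, Matrix.tail_cons]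
  norm_num
  have h0 : max (80 - 80 * ξ - c) 0 ≥ 80 - 80 * ξ - c := le_max_left _ _
  have h0' : max (80 - 80 * ξ - c) 0 ≥ 0 := le_max_right _ _
  have h1 : max (-c) 0 ≥ 0 := le_max_right _ _
  have h2 : max (50 * ξ - c) 0 ≥ 50 * ξ - c := le_max_left _ _
  have h2' : max (50 * ξ - c) 0 ≥ 0 := le_max_right _ _
  linarith

/-- For the two-period trinomial-tree market, the optimal value of the
conditional one-period CVaR₆₀% hedging problem given S₁ = 100 is attained at
ξ̄₁* = 8/13 ≈ 0.6154, which differs from the time-0 optimal plan ξ₁* ≈ 0.7665 of the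
static two-period CVaR₆₀% minimization. -/
theorem trinomial_conditional_cvar_minimizer :
    (∀ ξ : ℝ, cvar60 (midLoss (8 / 13)) ≤ cvar60 (midLoss ξ)) ∧
    (8 / 13 : ℝ) ≠ 0.7665 := by
  constructor
  · intro ξ
    have hle : cvar60 (midLoss (8 / 13)) ≤ 400 / 13 := by
      apply csInf_le
      · exact ⟨400 / 13, by rintro v ⟨c, rfl⟩; exact midLoss_lb _ c⟩
      · refine ⟨400 / 13, ?_⟩
        simp only [midLoss, midS2, Fin.sum_univ_three, Matrix.cons_val_zero, Matrix.cons_val_one, Matrix.cons_val_two, Matrix.head_cons, Matrix.tail_cons]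
        norm_num
    have hge : (400 / 13 : ℝ) ≤ cvar60 (midLoss ξ) := by
      apply le_csInf
      · exact ⟨_, 0, rfl⟩
      · rintro v ⟨c, rfl⟩; exact midLoss_lb _ c
    linarith
  · norm_num
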